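/- Let X be a real vector space, Y a real Banach space, and let f : X → Y be an odd function with ‖D_f(x,y)‖ ≤ φ(x,y) for all x, y ∈ X, where φ : X × X → [0,∞) satisfies: the series ∑_{i=1}^∞ 8^i·(φ(x/2^i, y/2^i) + 4·φ(0, x/2^i)) converges for all x, y ∈ X, and lim_{n→∞} 8^n·φ(x/2^n, y/2^n) = 0 for all x, y ∈ X. Then for each x ∈ X the limit C(x) := lim_{n→∞} 8^n·f(x/2^n) exists, C : X → Y is a cubic function satisfying the mixed functional equation (1.5), ‖f(x) − C(x)‖ ≤ (1/6)·∑_{i=1}^∞ 8^{i-1}·φ(0, x/2^i) + (4/6)·∑_{i=1}^∞ 8^{i-1}·φ(x/2^i, x/2^i) for all x ∈ X, and C is the unique cubic function satisfying (1.5) and this inequality. -/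

import Mathlib

open Filter Topology

/-- The mixed quadratic-cubic-quartic functional equation (1.5). -/
def MixedEq {X Y : Type*} [AddCommGroup X] [AddCommGroup Y] (f : X → Y) : Prop :=
  ∀ x y : X, 3 • (f (x + 2 • y) + f (x - 2 • y)) =
    12 • (f (x + y) + f (x - y)) + 4 • f (3 • y) - 18 • f (2 • y) + 36 • f y - 18 • f x

/-- The difference operator D_f. -/
def Dop {X Y : Type*} [AddCommGroup X] [AddCommGroup Y] (f : X → Y) (x y : X) : Y :=
  3 • (f (x + 2 • y) + f (x - 2 • y)) - 12 • (f (x + y) + f (x - y))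
    - 4 • f (3 • y) + 18 • f (2 • y) - 36 • f y + 18 • f x

/-- Quadratic functional equation. -/
def IsQuadratic {X Y : Type*} [AddCommGroup X] [AddCommGroup Y] (g : X → Y) : Prop :=
  ∀ x y : X, g (x + y) + g (x - y) = 2 • g x + 2 • g y

/-- Cubic functional equation. -/
def IsCubic {X Y : Type*} [AddCommGroup X] [AddCommGroup Y] (c : X → Y) : Prop :=
  ∀ x y : X, c (2 • x + y) + c (2 • x - y) = 2 • c (x + y) + 2 • c (x - y) + 12 • c x

/-- Quartic functional equation. -/
def IsQuartic {X Y : Type*} [AddCommGroup X] [AddCommGroup Y] (q : X → Y) : Prop :=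
  ∀ x y : X, q (2 • x + y) + q (2 • x - y) = 4 • (q (x + y) + q (x - y)) + 24 • q x - 6 • q y

section Aux

variable {X Y : Type*} [AddCommGroup X] [Module ℝ X] [AddCommGroup Y] [Module ℝ Y]

/-- Key identity: for odd `h`, `6 • (h(2t) - 8 h(t)) = 4 • Dop h t t - Dop h 0 t`. -/
lemma key_id (h : X → Y) (hodd : ∀ x : X, h (-x) = -h x) (h0 : h 0 = 0) (t : X) :
    (6:ℝ) • (h (2 • t) - (8:ℝ) • h t) = 4 • Dop h t t - Dop h 0 t := by
  have a1 : t + 2 • t = 3 • t := by module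
  have a2 : t - 2 • t = -t := by module
  have a3 : t + t = 2 • t := by module
  have a4 : t - t = (0:X) := sub_self t
  have a5 : (0:X) + 2 • t = 2 • t := zero_add _
  have a6 : (0:X) - 2 • t = -(2 • t) := zero_sub _
  have a7 : (0:X) + t = t := zero_add _
  have a8 : (0:X) - t = -t := zero_sub _
  simp only [Dop, a1, a2, a3, a4, a5, a6, a7, a8, hodd, h0]
  module

/-- `Dop` written with real scalar coefficients. -/
lemma Dop_real (h : X → Y) (x y : X) :
    Dop h x y = (3:ℝ) • (h (x + 2 • y) + h (x - 2 • y))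
      - (12:ℝ) • (h (x + y) + h (x - y)) - (4:ℝ) • h (3 • y)
      + (18:ℝ) • h (2 • y) - (36:ℝ) • h y + (18:ℝ) • h x := by
  simp only [Dop]; module

/-- For odd `h` with `h 0 = 0`, `Dop h t t = 6•h(2t) - h(3t) - 21•h t`. -/
lemma Dop_diag (h : X → Y) (hodd : ∀ x : X, h (-x) = -h x) (h0 : h 0 = 0) (t : X) :
    Dop h t t = (6:ℝ) • h (2 • t) - h (3 • t) - (21:ℝ) • h t := by
  have a1 : t + 2 • t = 3 • t := by module
  have a2 : t - 2 • t = -t := by module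
  have a3 : t + t = 2 • t := by module
  have a4 : t - t = (0:X) := sub_self t
  simp only [Dop, a1, a2, a3, a4, hodd, h0]
  module

end Aux

theorem stmt_7 {X Y : Type*} [AddCommGroup X] [Module ℝ X]
    [NormedAddCommGroup Y] [NormedSpace ℝ Y] [CompleteSpace Y]
    (f : X → Y) (hodd : ∀ x : X, f (-x) = -f x)
    (φ : X → X → ℝ) (hφ0 : ∀ x y : X, 0 ≤ φ x y)
    (hbd : ∀ x y : X, ‖Dop f x y‖ ≤ φ x y)
    (hsum : ∀ x y : X, Summable fun i : ℕ =>
      (8 : ℝ) ^ (i + 1) *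
        (φ (((2 : ℝ) ^ (i + 1))⁻¹ • x) (((2 : ℝ) ^ (i + 1))⁻¹ • y) +
          4 * φ 0 (((2 : ℝ) ^ (i + 1))⁻¹ • x)))
    (hlim : ∀ x y : X, Tendsto
      (fun n : ℕ => (8 : ℝ) ^ n * φ (((2 : ℝ) ^ n)⁻¹ • x) (((2 : ℝ) ^ n)⁻¹ • y)) atTop (𝓝 0)) :
    ∃ C : X → Y,
      (∀ x : X, Tendsto (fun n : ℕ => (8 : ℝ) ^ n • f (((2 : ℝ) ^ n)⁻¹ • x)) atTop (𝓝 (C x))) ∧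
      IsCubic C ∧ MixedEq C ∧
      (∀ x : X, ‖f x - C x‖ ≤
        (1 / 6) * ∑' i : ℕ, (8 : ℝ) ^ i * φ 0 (((2 : ℝ) ^ (i + 1))⁻¹ • x) +
        (4 / 6) * ∑' i : ℕ, (8 : ℝ) ^ i *
          φ (((2 : ℝ) ^ (i + 1))⁻¹ • x) (((2 : ℝ) ^ (i + 1))⁻¹ • x)) ∧
      (∀ C' : X → Y, IsCubic C' → MixedEq C' →
        (∀ x : X, ‖f x - C' x‖ ≤
          (1 / 6) * ∑' i : ℕ, (8 : ℝ) ^ i * φ 0 (((2 : ℝ) ^ (i + 1))⁻¹ • x) +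
          (4 / 6) * ∑' i : ℕ, (8 : ℝ) ^ i *
            φ (((2 : ℝ) ^ (i + 1))⁻¹ • x) (((2 : ℝ) ^ (i + 1))⁻¹ • x)) →
        C' = C) := by
  -- f 0 = 0
  have hf0 : f 0 = 0 := by
    have h := hodd 0
    rw [neg_zero] at h
    have h2 : (2:ℝ) • f 0 = 0 := by
      rw [two_smul]; nth_rewrite 2 [h]; simp
    simpa using (smul_eq_zero.mp h2).resolve_left (by norm_num)
  -- key step estimate
  have hkey : ∀ t : X, ‖f (2 • t) - (8:ℝ) • f t‖ ≤ (4/6) * φ t t + (1/6) * φ 0 t := by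
    intro t
    have hid := key_id f hodd hf0 t
    have hb : ‖4 • Dop f t t - Dop f 0 t‖ ≤ 4 * φ t t + φ 0 t := by
      calc ‖4 • Dop f t t - Dop f 0 t‖ ≤ ‖4 • Dop f t t‖ + ‖Dop f 0 t‖ := norm_sub_le _ _
        _ ≤ 4 * ‖Dop f t t‖ + ‖Dop f 0 t‖ := by
            gcongr
            exact norm_nsmul_le
        _ ≤ 4 * φ t t + φ 0 t :=
            add_le_add (mul_le_mul_of_nonneg_left (hbd t t) (by norm_num)) (hbd 0 t)
    have h7 : 6 * ‖f (2 • t) - (8:ℝ) • f t‖ = ‖4 • Dop f t t - Dop f 0 t‖ := by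
      rw [← hid, norm_smul]; norm_num
    linarith
  -- the approximating sequence
  set g : ℕ → X → Y := fun n x => (8:ℝ)^n • f (((2:ℝ)^n)⁻¹ • x) with hg
  -- halving identity
  have hhalf : ∀ (n : ℕ) (x : X), ((2:ℝ)^n)⁻¹ • x = 2 • (((2:ℝ)^(n+1))⁻¹ • x) := by
    intro n x
    have : (2:ℕ) • (((2:ℝ)^(n+1))⁻¹ • x) = (2:ℝ) • (((2:ℝ)^(n+1))⁻¹ • x) := by module
    rw [this, smul_smul]
    congr 1
    rw [pow_succ]
    field_simp
  -- step bound
  have hstep : ∀ (x : X) (n : ℕ), ‖g n x - g (n+1) x‖ ≤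
      (1/6) * ((8:ℝ)^n * φ 0 (((2:ℝ)^(n+1))⁻¹ • x))
      + (4/6) * ((8:ℝ)^n * φ (((2:ℝ)^(n+1))⁻¹ • x) (((2:ℝ)^(n+1))⁻¹ • x)) := by
    intro x n
    set t := ((2:ℝ)^(n+1))⁻¹ • x with ht
    have e1 : g n x - g (n+1) x = (8:ℝ)^n • (f (2 • t) - (8:ℝ) • f t) := by
      simp only [hg]
      rw [hhalf n x, ← ht, pow_succ, mul_smul, smul_sub]
    rw [e1, norm_smul]
    have : ‖(8:ℝ)^n‖ = (8:ℝ)^n := by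
      rw [Real.norm_eq_abs, abs_of_nonneg (by positivity)]
    rw [this]
    calc (8:ℝ)^n * ‖f (2 • t) - (8:ℝ) • f t‖ ≤ (8:ℝ)^n * ((4/6) * φ t t + (1/6) * φ 0 t) := by
          gcongr; exact hkey t
      _ = (1/6) * ((8:ℝ)^n * φ 0 t) + (4/6) * ((8:ℝ)^n * φ t t) := by ring
  -- summability of component series
  have hsu : ∀ x : X, Summable (fun n : ℕ => (8:ℝ)^n * φ 0 (((2:ℝ)^(n+1))⁻¹ • x)) := by
    intro x
    refine (hsum x x).of_nonneg_of_le
      (fun n => mul_nonneg (by positivity) (hφ0 _ _)) (fun n => ?_)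
    have h1 : (8:ℝ)^n ≤ 8^(n+1) := by
      rw [pow_succ]; nlinarith [pow_pos (by norm_num : (0:ℝ) < 8) n]
    nlinarith [hφ0 (((2:ℝ)^(n+1))⁻¹ • x) (((2:ℝ)^(n+1))⁻¹ • x),
      hφ0 (0:X) (((2:ℝ)^(n+1))⁻¹ • x), pow_pos (by norm_num : (0:ℝ) < 8) n]
  have hsw : ∀ x : X, Summable (fun n : ℕ =>
      (8:ℝ)^n * φ (((2:ℝ)^(n+1))⁻¹ • x) (((2:ℝ)^(n+1))⁻¹ • x)) := by
    intro x
    refine (hsum x x).of_nonneg_of_le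
      (fun n => mul_nonneg (by positivity) (hφ0 _ _)) (fun n => ?_)
    have h1 : (8:ℝ)^n ≤ 8^(n+1) := by
      rw [pow_succ]; nlinarith [pow_pos (by norm_num : (0:ℝ) < 8) n]
    nlinarith [hφ0 (((2:ℝ)^(n+1))⁻¹ • x) (((2:ℝ)^(n+1))⁻¹ • x),
      hφ0 (0:X) (((2:ℝ)^(n+1))⁻¹ • x), pow_pos (by norm_num : (0:ℝ) < 8) n]
  have hsd : ∀ x : X, Summable (fun n : ℕ =>
      (1/6) * ((8:ℝ)^n * φ 0 (((2:ℝ)^(n+1))⁻¹ • x))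
      + (4/6) * ((8:ℝ)^n * φ (((2:ℝ)^(n+1))⁻¹ • x) (((2:ℝ)^(n+1))⁻¹ • x))) := by
    intro x
    exact ((hsu x).mul_left _).add ((hsw x).mul_left _)
  -- Cauchy and limit
  have hCex : ∀ x : X, ∃ L : Y, Tendsto (fun n => g n x) atTop (𝓝 L) := by
    intro x
    apply cauchySeq_tendsto_of_complete
    apply cauchySeq_of_dist_le_of_summable _ _ (hsd x)
    intro n
    rw [dist_eq_norm]
    exact hstep x n
  choose C hC using hCex
  -- basic properties of C
  have hCodd : ∀ x : X, C (-x) = -C x := by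
    intro x
    have h1 : Tendsto (fun n => g n (-x)) atTop (𝓝 (C (-x))) := hC (-x)
    have h2 : Tendsto (fun n => g n (-x)) atTop (𝓝 (-C x)) := by
      have : (fun n => g n (-x)) = fun n => -(g n x) := by
        funext n; simp only [hg, smul_neg, hodd, smul_neg]
      rw [this]
      exact (hC x).neg
    exact tendsto_nhds_unique h1 h2
  have hC0 : C 0 = 0 := by
    have h1 : Tendsto (fun n => g n 0) atTop (𝓝 (C 0)) := hC 0
    have h2 : (fun n => g n 0) = fun _ => (0:Y) := by
      funext n; simp only [hg, smul_zero, hf0]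
    rw [h2] at h1
    exact tendsto_nhds_unique h1 tendsto_const_nhds
  -- Dop C = 0
  have hDC : ∀ x y : X, Dop C x y = 0 := by
    intro x y
    have hargs : ∀ (c : ℝ) (u v : X),
        c • (u + 2 • v) = c • u + 2 • (c • v) ∧
        c • (u - 2 • v) = c • u - 2 • (c • v) ∧
        c • (u + v) = c • u + c • v ∧
        c • (u - v) = c • u - c • v ∧
        c • ((3:ℕ) • v) = 3 • (c • v) ∧
        c • ((2:ℕ) • v) = 2 • (c • v) := by
      intro c u v
      refine ⟨by module, by module, by module, by module, by module, by module⟩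
    have hDgn : ∀ n : ℕ, (8:ℝ)^n • Dop f (((2:ℝ)^n)⁻¹ • x) (((2:ℝ)^n)⁻¹ • y)
        = (3:ℝ) • (g n (x + 2 • y) + g n (x - 2 • y))
          - (12:ℝ) • (g n (x + y) + g n (x - y)) - (4:ℝ) • g n (3 • y)
          + (18:ℝ) • g n (2 • y) - (36:ℝ) • g n y + (18:ℝ) • g n x := by
      intro n
      obtain ⟨b1, b2, b3, b4, b5, b6⟩ := hargs (((2:ℝ)^n)⁻¹) x y
      rw [Dop_real, ← b1, ← b2, ← b3, ← b4, ← b5, ← b6]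
      simp only [hg]
      module
    have hT1 : Tendsto (fun n => (8:ℝ)^n • Dop f (((2:ℝ)^n)⁻¹ • x) (((2:ℝ)^n)⁻¹ • y))
        atTop (𝓝 (Dop C x y)) := by
      simp only [hDgn]
      rw [Dop_real]
      exact ((((((hC (x + 2 • y)).add (hC (x - 2 • y))).const_smul (3:ℝ)).sub
        (((hC (x + y)).add (hC (x - y))).const_smul (12:ℝ))).sub
        ((hC (3 • y)).const_smul (4:ℝ))).add
        ((hC (2 • y)).const_smul (18:ℝ))).sub ((hC y).const_smul (36:ℝ)) |>.add
        ((hC x).const_smul (18:ℝ))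
    have hT2 : Tendsto (fun n => (8:ℝ)^n • Dop f (((2:ℝ)^n)⁻¹ • x) (((2:ℝ)^n)⁻¹ • y))
        atTop (𝓝 0) := by
      apply squeeze_zero_norm _ (hlim x y)
      intro n
      rw [norm_smul, Real.norm_eq_abs, abs_of_nonneg (by positivity : (0:ℝ) ≤ (8:ℝ)^n)]
      exact mul_le_mul_of_nonneg_left (hbd _ _) (by positivity)
    exact tendsto_nhds_unique hT1 hT2
  -- doubling for C
  have hC2 : ∀ t : X, C (2 • t) = (8:ℝ) • C t := by
    intro t
    have h := key_id C hCodd hC0 t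
    rw [hDC t t, hDC 0 t] at h
    simp only [smul_zero, sub_zero] at h
    have h0 : (6:ℝ) • (C (2 • t) - (8:ℝ) • C t) = (6:ℝ) • (0:Y) := by
      rw [h, smul_zero]
    have := smul_right_injective Y (by norm_num : (6:ℝ) ≠ 0) h0
    rwa [sub_eq_zero] at this
  -- tripling for C
  have hC3 : ∀ t : X, C (3 • t) = (27:ℝ) • C t := by
    intro t
    have h := Dop_diag C hCodd hC0 t
    rw [hDC t t] at h
    rw [hC2 t] at h
    linear_combination (norm := module) h
  -- MixedEq C
  have hME : MixedEq C := by
    intro x y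
    have h := hDC x y
    rw [Dop] at h
    linear_combination (norm := abel1) h
  -- IsCubic C
  have hCub : IsCubic C := by
    intro x y
    have h := hDC (2 • x) y
    rw [Dop_real] at h
    have e1 : 2 • x + 2 • y = 2 • (x + y) := by module
    have e2 : 2 • x - 2 • y = 2 • (x - y) := by module
    rw [e1, e2, hC2 (x + y), hC2 (x - y), hC2 x, hC2 y, hC3 y] at h
    apply smul_right_injective Y (by norm_num : (12:ℝ) ≠ 0)
    linear_combination (norm := module) -h
  -- the error bound
  have hbound : ∀ x : X, ‖f x - C x‖ ≤
      (1 / 6) * ∑' i : ℕ, (8 : ℝ) ^ i * φ 0 (((2 : ℝ) ^ (i + 1))⁻¹ • x) +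
      (4 / 6) * ∑' i : ℕ, (8 : ℝ) ^ i *
        φ (((2 : ℝ) ^ (i + 1))⁻¹ • x) (((2 : ℝ) ^ (i + 1))⁻¹ • x) := by
    intro x
    have h0 : g 0 x = f x := by simp [hg]
    have hd := dist_le_tsum_of_dist_le_of_tendsto₀ _
      (fun n => by rw [dist_eq_norm]; exact hstep x n) (hsd x) (hC x)
    rw [h0, dist_eq_norm] at hd
    calc ‖f x - C x‖ ≤ ∑' n : ℕ, ((1/6) * ((8:ℝ)^n * φ 0 (((2:ℝ)^(n+1))⁻¹ • x))
          + (4/6) * ((8:ℝ)^n * φ (((2:ℝ)^(n+1))⁻¹ • x) (((2:ℝ)^(n+1))⁻¹ • x))) := hd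
      _ = (1/6) * ∑' i : ℕ, (8:ℝ)^i * φ 0 (((2:ℝ)^(i+1))⁻¹ • x)
          + (4/6) * ∑' i : ℕ, (8:ℝ)^i * φ (((2:ℝ)^(i+1))⁻¹ • x) (((2:ℝ)^(i+1))⁻¹ • x) := by
          rw [Summable.tsum_add ((hsu x).mul_left _) ((hsw x).mul_left _), tsum_mul_left, tsum_mul_left]
  refine ⟨C, hC, hCub, hME, hbound, ?_⟩
  -- uniqueness
  intro C' hCub' _hME' hb'
  -- C' 0 = 0 and doubling for C'
  have hC'0 : C' 0 = 0 := by
    have h := hCub' 0 0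
    simp only [smul_zero, add_zero, sub_zero] at h
    have h14 : (14:ℝ) • C' 0 = 0 := by
      linear_combination (norm := module) -h
    have := smul_right_injective Y (by norm_num : (14:ℝ) ≠ 0)
      (h14.trans (smul_zero (14:ℝ)).symm)
    simpa using this
  have hC'2 : ∀ t : X, C' (2 • t) = (8:ℝ) • C' t := by
    intro t
    have h := hCub' t 0
    rw [add_zero, sub_zero, add_zero, sub_zero] at h
    apply smul_right_injective Y (by norm_num : (2:ℝ) ≠ 0)
    linear_combination (norm := module) h
  -- iteration
  have hiter : ∀ (h : X → Y), (∀ t : X, h (2 • t) = (8:ℝ) • h t) →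
      ∀ (n : ℕ) (x : X), h x = (8:ℝ)^n • h (((2:ℝ)^n)⁻¹ • x) := by
    intro h hdb n
    induction n with
    | zero => intro x; simp
    | succ n ih =>
      intro x
      rw [ih x, hhalf n x, hdb, smul_smul, ← pow_succ]
  -- the tail bound function
  set Φ : X → ℝ := fun x =>
    (1 / 6) * ∑' i : ℕ, (8 : ℝ) ^ i * φ 0 (((2 : ℝ) ^ (i + 1))⁻¹ • x) +
    (4 / 6) * ∑' i : ℕ, (8 : ℝ) ^ i *
      φ (((2 : ℝ) ^ (i + 1))⁻¹ • x) (((2 : ℝ) ^ (i + 1))⁻¹ • x) with hΦdef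
  funext x
  -- the scaled-argument identity
  have hscale : ∀ (k n : ℕ), (((2:ℝ)^(k+1))⁻¹ • (((2:ℝ)^n)⁻¹ • x)) = ((2:ℝ)^(k+n+1))⁻¹ • x := by
    intro k n
    rw [smul_smul]
    congr 1
    rw [← mul_inv, ← pow_add]
    ring_nf
  -- tail tendsto zero
  have htail : Tendsto (fun n : ℕ => (8:ℝ)^n * Φ (((2:ℝ)^n)⁻¹ • x)) atTop (𝓝 0) := by
    have hv : ∀ n : ℕ, (8:ℝ)^n * Φ (((2:ℝ)^n)⁻¹ • x)
        = (1/6) * ∑' k : ℕ, ((8:ℝ)^(k+n) * φ 0 (((2:ℝ)^((k+n)+1))⁻¹ • x))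
          + (4/6) * ∑' k : ℕ, ((8:ℝ)^(k+n) *
            φ (((2:ℝ)^((k+n)+1))⁻¹ • x) (((2:ℝ)^((k+n)+1))⁻¹ • x)) := by
      intro n
      have hS1 : (8:ℝ)^n * (∑' k : ℕ, (8:ℝ)^k * φ 0 (((2:ℝ)^(k+1))⁻¹ • (((2:ℝ)^n)⁻¹ • x)))
          = ∑' k : ℕ, ((8:ℝ)^(k+n) * φ 0 (((2:ℝ)^((k+n)+1))⁻¹ • x)) := by
        rw [← tsum_mul_left]
        congr 1
        funext k
        rw [hscale k n, pow_add]
        ring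
      have hS2 : (8:ℝ)^n * (∑' k : ℕ, (8:ℝ)^k *
            φ (((2:ℝ)^(k+1))⁻¹ • (((2:ℝ)^n)⁻¹ • x)) (((2:ℝ)^(k+1))⁻¹ • (((2:ℝ)^n)⁻¹ • x)))
          = ∑' k : ℕ, ((8:ℝ)^(k+n) *
            φ (((2:ℝ)^((k+n)+1))⁻¹ • x) (((2:ℝ)^((k+n)+1))⁻¹ • x)) := by
        rw [← tsum_mul_left]
        congr 1
        funext k
        rw [hscale k n, pow_add]
        ring
      calc (8:ℝ)^n * Φ (((2:ℝ)^n)⁻¹ • x)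
          = (1/6) * ((8:ℝ)^n * (∑' k : ℕ, (8:ℝ)^k * φ 0 (((2:ℝ)^(k+1))⁻¹ • (((2:ℝ)^n)⁻¹ • x))))
            + (4/6) * ((8:ℝ)^n * (∑' k : ℕ, (8:ℝ)^k *
              φ (((2:ℝ)^(k+1))⁻¹ • (((2:ℝ)^n)⁻¹ • x)) (((2:ℝ)^(k+1))⁻¹ • (((2:ℝ)^n)⁻¹ • x)))) := by
            simp only [hΦdef]
            ring
        _ = _ := by rw [hS1, hS2]
    simp only [hv]
    have t1 := tendsto_sum_nat_add (fun j => (8:ℝ)^j * φ 0 (((2:ℝ)^(j+1))⁻¹ • x))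
    have t2 := tendsto_sum_nat_add (fun j => (8:ℝ)^j *
      φ (((2:ℝ)^(j+1))⁻¹ • x) (((2:ℝ)^(j+1))⁻¹ • x))
    have := ((t1.const_mul (1/6:ℝ)).add (t2.const_mul (4/6:ℝ)))
    simpa using this
  -- pointwise estimate
  have hest : ∀ n : ℕ, ‖C' x - C x‖ ≤ 2 * ((8:ℝ)^n * Φ (((2:ℝ)^n)⁻¹ • x)) := by
    intro n
    set t := ((2:ℝ)^n)⁻¹ • x with ht
    have e1 : C' x - C x = (8:ℝ)^n • (C' t - C t) := by
      rw [hiter C' hC'2 n x, hiter C hC2 n x, ← ht, smul_sub]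
    rw [e1, norm_smul, Real.norm_eq_abs, abs_of_nonneg (by positivity : (0:ℝ) ≤ (8:ℝ)^n)]
    have h2 : ‖C' t - C t‖ ≤ ‖f t - C' t‖ + ‖f t - C t‖ := by
      calc ‖C' t - C t‖ = ‖(f t - C t) - (f t - C' t)‖ := by congr 1; abel
        _ ≤ ‖f t - C t‖ + ‖f t - C' t‖ := norm_sub_le _ _
        _ = ‖f t - C' t‖ + ‖f t - C t‖ := by ring
    have h3 : ‖f t - C' t‖ ≤ Φ t := hb' t
    have h4 : ‖f t - C t‖ ≤ Φ t := hbound t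
    calc (8:ℝ)^n * ‖C' t - C t‖ ≤ (8:ℝ)^n * (Φ t + Φ t) := by
          gcongr
          linarith [h2, h3, h4]
      _ = 2 * ((8:ℝ)^n * Φ t) := by ring
  have hz : ‖C' x - C x‖ ≤ 0 := by
    have hlim2 : Tendsto (fun n : ℕ => 2 * ((8:ℝ)^n * Φ (((2:ℝ)^n)⁻¹ • x))) atTop (𝓝 0) := by
      have := htail.const_mul (2:ℝ)
      simpa using this
    exact ge_of_tendsto hlim2 (Eventually.of_forall hest)
  have : C' x - C x = 0 := by
    rwa [← norm_le_zero_iff]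
  exact sub_eq_zero.mp this
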